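/- In an unstable algebra over the mod-2 Steenrod algebra whose underlying module quotient by its maximal nilpotent submodule is nonzero only in degrees of the form 2^h, every element x of positive degree in the quotient satisfies: if x ≠ 0 then x³ ≠ 0 (since x⁴ = Sq_0²x ≠ 0), yet deg(x³) = 3·deg(x) is not a power of 2 — a contradiction. Hence no such unstable algebra has a nonzero positive-degree element in the quotient. -/

import Mathlib

/-- An *unstable module* over the mod-2 Steenrod algebra, presented by its graded
pieces, the Steenrod square operations `Sq^i : M^n → M^{n+i}`, and the
instability condition `Sq^i x = 0` for `i > deg x`. -/
structure USM where
  M : ℕ → Type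
  inst : ∀ n, AddCommGroup (M n)
  sq : ∀ (i n : ℕ), M n → M (n + i)
  sq_add : ∀ i n (x y : M n), sq i n (x + y) = sq i n x + sq i n y
  sq_zero : ∀ i n, sq i n (0 : M n) = 0
  sq0_id : ∀ n (x : M n), sq 0 n x = x
  instab : ∀ i n (x : M n), n < i → sq i n x = 0
  char2 : ∀ n (x : M n), x + x = 0

attribute [instance] USM.inst

namespace USM

variable (A : USM)

/-- Degree-cast. -/
def castM {m n : ℕ} (h : m = n) (x : A.M m) : A.M n := h ▸ x

/-- The (homogeneous) elements of `A`, together with their degree. -/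
def El := Σ n, A.M n

/-- `Sq^i` on elements. -/
def sqEl (i : ℕ) (x : A.El) : A.El := ⟨x.1 + i, A.sq i x.1 x.2⟩

/-- The lower-indexed operation `Sq_k x = Sq^{|x|-k} x` (zero when `k > |x|`). -/
def sqLow (k : ℕ) (x : A.El) : A.El :=
  if k ≤ x.1 then ⟨x.1 + (x.1 - k), A.sq (x.1 - k) x.1 x.2⟩ else ⟨x.1, 0⟩

/-- An element is zero. -/
def IsZeroEl (x : A.El) : Prop := x.2 = 0

/-- `x` lies in the largest `s`-nilpotent submodule `M_s` of `M`: every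
iterated operation `(Sq_k)^c`, `k < s`, eventually vanishes on `x`
(Proposition 1.4 of the paper, originally the definition of nilpotency in [6]). -/
def NilElem (s : ℕ) (x : A.El) : Prop :=
  ∀ k < s, ∃ c : ℕ, A.IsZeroEl ((A.sqLow k)^[c] x)

/-- `A` belongs to `Nil_s`: it is (at least) `s`-nilpotent. -/
def IsNil (s : ℕ) : Prop := ∀ x : A.El, A.NilElem s x

/-- `A` is reduced: it contains no nontrivial suspension, equivalently
`Sq₀ = (x ↦ Sq^{|x|} x)` is injective. -/
def Reduced : Prop := ∀ n (x : A.M n), A.sq n n x = 0 → x = 0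

/-- Applying a composite Steenrod operation `Sq^{i₁} Sq^{i₂} ⋯` to an element. -/
def applyList : List ℕ → A.El → A.El
  | [], x => x
  | i :: L, x => A.sqEl i (applyList L x)

/-- `A` is *locally finite*: every element generates a finite submodule over the
Steenrod algebra; equivalently (the Steenrod algebra being finite in each degree)
for every `x` all composite Steenrod operations of sufficiently large total
degree vanish on `x`. -/
def LocFinite : Prop :=
  ∀ x : A.El, ∃ N : ℕ, ∀ L : List ℕ, N ≤ L.sum → A.IsZeroEl (A.applyList L x)

end USM

/-- A morphism of unstable modules. -/
structure USMHom (A B : USM) where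
  f : ∀ n, A.M n → B.M n
  map_add : ∀ n (x y : A.M n), f n (x + y) = f n x + f n y
  map_sq : ∀ i n (x : A.M n), f (n + i) (A.sq i n x) = B.sq i n (f n x)

/-- The Adem relations hold in `A` (for `0 < a < 2b`):
`Sq^a Sq^b = Σ_{i≤a/2} C(b-1-i, a-2i) Sq^{a+b-i} Sq^i` modulo 2. -/
def USM.AdemHolds (A : USM) : Prop :=
  ∀ (a b n : ℕ) (x : A.M n), 0 < a → a < 2 * b →
    A.sq a (n + b) (A.sq b n x) =
      ∑ i ∈ (Finset.range (a / 2 + 1)).attach,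
        if Nat.choose (b - 1 - i.1) (a - 2 * i.1) % 2 = 1 then
          A.castM (by have := Finset.mem_range.mp i.2; omega)
            (A.sq (a + b - i.1) (n + i.1) (A.sq i.1 n x))
        else 0

/-- the `d = 0` case in Section 4.  Let `K` be a reduced
unstable algebra (squaring `= Sq₀` is injective) which is nonzero only in
degrees `0` and `2^h`.  Then every element of positive degree is zero:
otherwise `x ≠ 0` gives `x⁴ = (x²)² ≠ 0`, hence `x³ ≠ 0`, yet
`deg x³ = 3 · deg x` is not a power of `2`. -/
theorem reduced_unstable_algebra_power_of_two_degrees (K : USM)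
    (mul : ∀ p q, K.M p → K.M q → K.M (p + q))
    (mul_addl : ∀ p q (x x' : K.M p) (y : K.M q),
      mul p q (x + x') y = mul p q x y + mul p q x' y)
    (mul_addr : ∀ p q (x : K.M p) (y y' : K.M q),
      mul p q x (y + y') = mul p q x y + mul p q x y')
    (mul_assoc : ∀ p q r (x : K.M p) (y : K.M q) (z : K.M r),
      mul (p + q) r (mul p q x y) z =
        K.castM (by omega) (mul p (q + r) x (mul q r y z)))
    (mul_comm : ∀ p q (x : K.M p) (y : K.M q),
      mul p q x y = K.castM (by omega) (mul q p y x))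
    (restr : ∀ n (x : K.M n), K.sq n n x = mul n n x x)
    (hred : ∀ n (x : K.M n), mul n n x x = 0 → x = 0)
    (hdeg : ∀ n (x : K.M n), x ≠ 0 → n = 0 ∨ ∃ h : ℕ, n = 2 ^ h) :
    ∀ n, 0 < n → ∀ x : K.M n, x = 0 := by
  intro n hn x
  by_contra hx
  have castM_zero : ∀ {p q : ℕ} (h : p = q) (y : K.M p), K.castM h y = 0 → y = 0 := by
    intro p q h y hy; subst h; exact hy
  have mul_zero_left : ∀ p q (y : K.M q), mul p q (0 : K.M p) y = 0 := by
    intro p q y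
    have h2 := mul_addl p q 0 0 y
    rw [add_zero] at h2
    exact left_eq_add.mp h2
  rcases hdeg n x hx with h0 | ⟨h, hnh⟩
  · omega
  set x2 := mul n n x x with hx2
  have hx2ne : x2 ≠ 0 := fun hz => hx (hred n x hz)
  have hx4ne : mul (n + n) (n + n) x2 x2 ≠ 0 := fun hz => hx2ne (hred _ x2 hz)
  by_cases hx3 : mul (n + n) n x2 x = 0
  · have hA := mul_assoc (n + n) n n x2 x x
    rw [hx3, mul_zero_left] at hA
    exact hx4ne (castM_zero _ _ hA.symm)
  · rcases hdeg (n + n + n) _ hx3 with h0 | ⟨k, hk⟩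
    · omega
    · have hdvd : (3 : ℕ) ∣ 2 ^ k := ⟨2 ^ h, by omega⟩
      have := Nat.Prime.dvd_of_dvd_pow Nat.prime_three hdvd
      omega
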